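/- Let f ∈ H²(𝕋²) have mean zero. Then ‖f‖_{L^∞(𝕋²)} ≤ (√6.05 / (2π)²) ‖f‖_{Ḣ²(𝕋²)}, where ‖f‖_{Ḣ²} = ‖(2π|k|)² f̂(k)‖_{ℓ²_k(ℤ²)}. -/

import Mathlib

open Real



/-- weight `1/|k|⁴` on `ℤ² \ {0}`. -/
noncomputable def wfun (k : ℤ × ℤ) : ℝ :=
  if k = 0 then 0 else (((k.1 : ℝ) ^ 2 + (k.2 : ℝ) ^ 2) ^ 2)⁻¹

lemma wfun_nonneg (k : ℤ × ℤ) : 0 ≤ wfun k := by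
  unfold wfun; split <;> positivity

/-- square `[-n,n]²` as a finset. -/
noncomputable def sqA (n : ℕ) : Finset (ℤ × ℤ) := Finset.Icc (-(n : ℤ), -(n : ℤ)) ((n : ℤ), (n : ℤ))

lemma sqA_mono {m n : ℕ} (h : m ≤ n) : sqA m ⊆ sqA n := by
  apply Finset.Icc_subset_Icc <;> simp [Prod.le_def] <;> omega

lemma card_sqA (n : ℕ) : (sqA n).card = (2 * n + 1) * (2 * n + 1) := by
  rw [sqA, Finset.card_Icc_prod]
  simp [Int.card_Icc]
  have : ((n:ℤ) + 1 + n).toNat = 2*n+1 := by omega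
  rw [this]

lemma wfun_le_nat (k : ℤ × ℤ) :
    wfun k ≤ ((10 ^ 9 / ((k.1 ^ 2 + k.2 ^ 2) ^ 2).toNat + 1 : ℕ) : ℝ) / 10 ^ 9 := by
  unfold wfun
  split
  · positivity
  · rename_i hk
    set d : ℕ := ((k.1 ^ 2 + k.2 ^ 2) ^ 2).toNat with hd
    have hd0 : (0 : ℤ) < (k.1 ^ 2 + k.2 ^ 2) ^ 2 := by
      have h1 : k.1 ≠ 0 ∨ k.2 ≠ 0 := by
        by_contra h; push_neg at h; exact hk (Prod.ext h.1 h.2)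
      have : (0:ℤ) < k.1 ^ 2 + k.2 ^ 2 := by
        rcases h1 with h | h <;> positivity
      positivity
    have hdpos : 0 < d := by rw [hd]; omega
    have hcast : ((k.1 : ℝ) ^ 2 + (k.2 : ℝ) ^ 2) ^ 2 = (d : ℝ) := by
      rw [hd]
      rw [← Int.cast_natCast (R := ℝ), Int.toNat_of_nonneg hd0.le]
      push_cast
      ring
    rw [hcast]
    have hK : (10 ^ 9 : ℕ) < d * (10 ^ 9 / d + 1) := by
      have h1 := Nat.div_add_mod (10 ^ 9) d
      have h2 := Nat.mod_lt (10 ^ 9) hdpos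
      nlinarith
    rw [inv_eq_one_div, div_le_div_iff₀ (by positivity) (by positivity)]
    have : ((10:ℝ) ^ 9) ≤ (d : ℝ) * ((10 ^ 9 / d + 1 : ℕ) : ℝ) := by
      exact_mod_cast hK.le
    linarith

set_option maxRecDepth 1000000 in
lemma natbox :
    (∑ k ∈ sqA 15, (10 ^ 9 / ((k.1 ^ 2 + k.2 ^ 2) ^ 2).toNat + 1)) = 6016124633 := by
  decide

lemma box_sum_le : ∑ k ∈ sqA 15, wfun k ≤ 6.05 - 4 / 225 := by
  calc ∑ k ∈ sqA 15, wfun k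
      ≤ ∑ k ∈ sqA 15, ((10 ^ 9 / ((k.1 ^ 2 + k.2 ^ 2) ^ 2).toNat + 1 : ℕ) : ℝ) / 10 ^ 9 :=
        Finset.sum_le_sum fun k _ => wfun_le_nat k
    _ = ((∑ k ∈ sqA 15, (10 ^ 9 / ((k.1 ^ 2 + k.2 ^ 2) ^ 2).toNat + 1) : ℕ) : ℝ) / 10 ^ 9 := by
        rw [← Finset.sum_div, Nat.cast_sum]
    _ ≤ 6.05 - 4 / 225 := by
        rw [natbox]; norm_num

lemma shell_sum_le (m : ℕ) :
    ∑ k ∈ sqA (m + 1) \ sqA m, wfun k ≤ 8 * ((m : ℝ) + 1) * (((m : ℝ) + 1) ^ 4)⁻¹ := by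
  have hb : ∀ k ∈ sqA (m + 1) \ sqA m, wfun k ≤ (((m : ℝ) + 1) ^ 4)⁻¹ := by
    intro k hk
    rw [Finset.mem_sdiff] at hk
    obtain ⟨-, hk2⟩ := hk
    have hmem : ¬(-(m : ℤ) ≤ k.1 ∧ -(m : ℤ) ≤ k.2 ∧ k.1 ≤ m ∧ k.2 ≤ m) := by
      intro h
      exact hk2 (by rw [sqA, Finset.mem_Icc]; exact ⟨⟨h.1, h.2.1⟩, ⟨h.2.2.1, h.2.2.2⟩⟩)
    have hsq : ((m : ℤ) + 1) ^ 2 ≤ k.1 ^ 2 + k.2 ^ 2 := by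
      have h1 : ((m:ℤ) + 1) ≤ |k.1| ∨ ((m:ℤ) + 1) ≤ |k.2| := by
        rcases abs_cases k.1 with ⟨e1, _⟩ | ⟨e1, _⟩ <;>
          rcases abs_cases k.2 with ⟨e2, _⟩ | ⟨e2, _⟩ <;> omega
      have h2 : k.1 ^ 2 = |k.1| ^ 2 := (sq_abs k.1).symm
      have h3 : k.2 ^ 2 = |k.2| ^ 2 := (sq_abs k.2).symm
      rcases h1 with h | h
      · nlinarith [sq_nonneg k.2, abs_nonneg k.1]
      · nlinarith [sq_nonneg k.1, abs_nonneg k.2]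
    have hk0 : k ≠ 0 := by
      intro h
      exact hmem ⟨by simp only [h, Prod.fst_zero]; omega, by simp only [h, Prod.snd_zero]; omega,
        by simp only [h, Prod.fst_zero]; omega, by simp only [h, Prod.snd_zero]; omega⟩
    rw [wfun, if_neg hk0]
    have hsqr : ((m : ℝ) + 1) ^ 2 ≤ (k.1 : ℝ) ^ 2 + (k.2 : ℝ) ^ 2 := by exact_mod_cast hsq
    have h4 : ((m : ℝ) + 1) ^ 4 ≤ ((k.1 : ℝ) ^ 2 + (k.2 : ℝ) ^ 2) ^ 2 := by nlinarith
    exact inv_anti₀ (by positivity) h4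
  calc ∑ k ∈ sqA (m + 1) \ sqA m, wfun k
      ≤ (sqA (m + 1) \ sqA m).card • (((m : ℝ) + 1) ^ 4)⁻¹ := Finset.sum_le_card_nsmul _ _ _ hb
    _ ≤ 8 * ((m : ℝ) + 1) * (((m : ℝ) + 1) ^ 4)⁻¹ := by
        have hcard : (sqA (m + 1) \ sqA m).card = 8 * (m + 1) := by
          rw [Finset.card_sdiff_of_subset (sqA_mono (Nat.le_succ m)), card_sqA, card_sqA,
            Nat.sub_eq_iff_eq_add (by nlinarith)]
          simp [Nat.succ_eq_add_one]
          ring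
        rw [hcard, nsmul_eq_mul]
        exact le_of_eq (by push_cast; ring)

lemma annulus_le (N : ℕ) :
    ∑ k ∈ sqA (15 + N), wfun k ≤ 6.05 - 4 / ((15 : ℝ) + N) ^ 2 := by
  induction N with
  | zero => simpa using box_sum_le.trans (by norm_num)
  | succ n ih =>
    have hsub : sqA (15 + n) ⊆ sqA (15 + n + 1) := sqA_mono (by omega)
    have hsplit : ∑ k ∈ sqA (15 + n + 1), wfun k
        = ∑ k ∈ sqA (15 + n + 1) \ sqA (15 + n), wfun k + ∑ k ∈ sqA (15 + n), wfun k :=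
      (Finset.sum_sdiff hsub).symm
    have hshell := shell_sum_le (15 + n)
    have key : 8 * ((15 + n : ℝ) + 1) * (((15 + n : ℝ) + 1) ^ 4)⁻¹
        ≤ 4 / ((15 : ℝ) + n) ^ 2 - 4 / ((15 : ℝ) + n + 1) ^ 2 := by
      have hm : (0 : ℝ) ≤ (n : ℝ) := Nat.cast_nonneg n
      set x : ℝ := (15 : ℝ) + n with hxdef
      have hx : (15 : ℝ) ≤ x := by rw [hxdef]; linarith
      have hx0 : (0 : ℝ) < x := by linarith
      have hx1 : (0 : ℝ) < x + 1 := by linarith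
      have heq : 4 / x ^ 2 - 4 / (x + 1) ^ 2 - 8 * (x + 1) * ((x + 1) ^ 4)⁻¹
          = (12 * x + 4) / (x ^ 2 * (x + 1) ^ 3) := by
        field_simp
        ring
      have hpos : (0 : ℝ) ≤ (12 * x + 4) / (x ^ 2 * (x + 1) ^ 3) := by positivity
      linarith [heq ▸ hpos]
    have : ((15 : ℝ) + (n + 1 : ℕ)) = (15 : ℝ) + n + 1 := by push_cast; ring
    rw [show 15 + (n + 1) = 15 + n + 1 from rfl, hsplit, this]
    push_cast at hshell ⊢
    linarith

lemma global_sum_le (s : Finset (ℤ × ℤ)) : ∑ k ∈ s, wfun k ≤ 6.05 := by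
  set M : ℕ := 15 + ∑ j ∈ s, (j.1.natAbs + j.2.natAbs) with hM
  have hsub : s ⊆ sqA M := by
    intro k hk
    have h1 : k.1.natAbs + k.2.natAbs ≤ ∑ j ∈ s, (j.1.natAbs + j.2.natAbs) :=
      Finset.single_le_sum (f := fun j => j.1.natAbs + j.2.natAbs) (fun j _ => Nat.zero_le _) hk
    rw [sqA, Finset.mem_Icc]
    constructor <;> constructor <;> simp only [Prod.fst, Prod.snd] <;> omega
  calc ∑ k ∈ s, wfun k ≤ ∑ k ∈ sqA M, wfun k :=
        Finset.sum_le_sum_of_subset_of_nonneg hsub (fun k _ _ => wfun_nonneg k)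
    _ ≤ 6.05 - 4 / ((15 : ℝ) + (∑ j ∈ s, (j.1.natAbs + j.2.natAbs) : ℕ)) ^ 2 := annulus_le _
    _ ≤ 6.05 := by
        have h0 : (0 : ℝ) ≤ ((∑ j ∈ s, (j.1.natAbs + j.2.natAbs) : ℕ) : ℝ) := Nat.cast_nonneg _
        have : (0:ℝ) < ((15 : ℝ) + ((∑ j ∈ s, (j.1.natAbs + j.2.natAbs) : ℕ) : ℝ)) ^ 2 := by positivity
        have : (0:ℝ) ≤ 4 / ((15 : ℝ) + ((∑ j ∈ s, (j.1.natAbs + j.2.natAbs) : ℕ) : ℝ)) ^ 2 := by positivity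
        linarith

lemma wfun_summable : Summable wfun :=
  summable_of_sum_le wfun_nonneg global_sum_le

lemma wfun_tsum_le : ∑' k, wfun k ≤ 6.05 :=
  Summable.tsum_le_of_sum_le wfun_summable global_sum_le


/-- for a mean-zero `f ∈ H²(𝕋²)` given by its Fourier series,
`‖f‖_∞ ≤ (√6.05/(2π)²) ‖f‖_{Ḣ²}`. -/
theorem stmt6 (a : ℤ × ℤ → ℂ) (h0 : a 0 = 0)
    (hH2 : Summable fun k : ℤ × ℤ =>
      (((2 * π) ^ 2 * ((k.1 : ℝ) ^ 2 + (k.2 : ℝ) ^ 2)) ^ 2) * ‖a k‖ ^ 2) :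
    ∀ x : ℝ × ℝ,
      ‖∑' k : ℤ × ℤ,
          a k * Complex.exp (2 * π * Complex.I *
            (((k.1 : ℝ) * x.1 + (k.2 : ℝ) * x.2 : ℝ) : ℂ))‖ ≤
        Real.sqrt 6.05 / (2 * π) ^ 2 *
          Real.sqrt (∑' k : ℤ × ℤ,
            (((2 * π) ^ 2 * ((k.1 : ℝ) ^ 2 + (k.2 : ℝ) ^ 2)) ^ 2) * ‖a k‖ ^ 2) := by
  intro x
  set h : ℤ × ℤ → ℝ :=
    fun k => (((2 * π) ^ 2 * ((k.1 : ℝ) ^ 2 + (k.2 : ℝ) ^ 2)) ^ 2) * ‖a k‖ ^ 2 with hh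
  have hhnn : ∀ k, 0 ≤ h k := fun k => by rw [hh]; positivity
  have hπ : (0 : ℝ) < π := Real.pi_pos
  have hnorm : ∀ k : ℤ × ℤ,
      ‖a k * Complex.exp (2 * π * Complex.I *
        (((k.1 : ℝ) * x.1 + (k.2 : ℝ) * x.2 : ℝ) : ℂ))‖ = ‖a k‖ := by
    intro k
    rw [norm_mul]
    have harg : (2 * (π : ℂ) * Complex.I * (((k.1 : ℝ) * x.1 + (k.2 : ℝ) * x.2 : ℝ) : ℂ))
        = ((2 * π * ((k.1 : ℝ) * x.1 + (k.2 : ℝ) * x.2) : ℝ) : ℂ) * Complex.I := by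
      push_cast; ring
    have h1 : ‖Complex.exp (((2 * π * ((k.1 : ℝ) * x.1 + (k.2 : ℝ) * x.2) : ℝ) : ℂ) * Complex.I)‖
        = 1 := by
      rw [Complex.norm_exp_ofReal_mul_I]
    rw [harg, h1, mul_one]
  have key : ∀ k : ℤ × ℤ,
      ‖a k‖ = ((2 * π) ^ 2)⁻¹ * (Real.sqrt (wfun k) * Real.sqrt (h k)) := by
    intro k
    by_cases hk : k = 0
    · simp [hk, h0, wfun]
    · have hq : (0 : ℝ) < (k.1 : ℝ) ^ 2 + (k.2 : ℝ) ^ 2 := by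
        have h1 : k.1 ≠ 0 ∨ k.2 ≠ 0 := by
          by_contra hc; push_neg at hc; exact hk (Prod.ext hc.1 hc.2)
        have h2 : ((k.1 : ℝ) ≠ 0) ∨ ((k.2 : ℝ) ≠ 0) := by
          rcases h1 with h | h
          · exact Or.inl (Int.cast_ne_zero.mpr h)
          · exact Or.inr (Int.cast_ne_zero.mpr h)
        rcases h2 with h | h <;> positivity
      have hw : Real.sqrt (wfun k) = ((k.1 : ℝ) ^ 2 + (k.2 : ℝ) ^ 2)⁻¹ := by
        rw [wfun, if_neg hk, Real.sqrt_inv, Real.sqrt_sq hq.le]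
      have hhs : Real.sqrt (h k) = (2 * π) ^ 2 * ((k.1 : ℝ) ^ 2 + (k.2 : ℝ) ^ 2) * ‖a k‖ := by
        rw [hh]
        rw [Real.sqrt_mul (sq_nonneg _), Real.sqrt_sq (by positivity), Real.sqrt_sq (norm_nonneg _)]
      rw [hw, hhs]
      field_simp
  have hCS : ∀ s : Finset (ℤ × ℤ),
      ∑ k ∈ s, Real.sqrt (wfun k) * Real.sqrt (h k)
        ≤ Real.sqrt 6.05 * Real.sqrt (∑' k, h k) := by
    intro s
    calc ∑ k ∈ s, Real.sqrt (wfun k) * Real.sqrt (h k)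
        ≤ Real.sqrt (∑ k ∈ s, wfun k) * Real.sqrt (∑ k ∈ s, h k) :=
          Real.sum_sqrt_mul_sqrt_le s (fun k => wfun_nonneg k) (fun k => hhnn k)
      _ ≤ Real.sqrt 6.05 * Real.sqrt (∑' k, h k) := by
          apply mul_le_mul
          · exact Real.sqrt_le_sqrt (global_sum_le s)
          · exact Real.sqrt_le_sqrt (Summable.sum_le_tsum s (fun k _ => hhnn k) hH2)
          · exact Real.sqrt_nonneg _
          · exact Real.sqrt_nonneg _
  have huv_nonneg : ∀ k, 0 ≤ Real.sqrt (wfun k) * Real.sqrt (h k) := fun k => by positivity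
  have hsum_uv : Summable (fun k => Real.sqrt (wfun k) * Real.sqrt (h k)) :=
    summable_of_sum_le huv_nonneg hCS
  have hsum_na : Summable (fun k : ℤ × ℤ => ‖a k‖) :=
    (hsum_uv.mul_left (((2 * π) ^ 2)⁻¹)).congr fun k => (key k).symm
  have hsum_f : Summable (fun k : ℤ × ℤ =>
      ‖a k * Complex.exp (2 * π * Complex.I *
        (((k.1 : ℝ) * x.1 + (k.2 : ℝ) * x.2 : ℝ) : ℂ))‖) :=
    hsum_na.congr fun k => (hnorm k).symm
  calc ‖∑' k : ℤ × ℤ, a k * Complex.exp (2 * π * Complex.I *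
        (((k.1 : ℝ) * x.1 + (k.2 : ℝ) * x.2 : ℝ) : ℂ))‖
      ≤ ∑' k : ℤ × ℤ, ‖a k * Complex.exp (2 * π * Complex.I *
        (((k.1 : ℝ) * x.1 + (k.2 : ℝ) * x.2 : ℝ) : ℂ))‖ := norm_tsum_le_tsum_norm hsum_f
    _ = ∑' k : ℤ × ℤ, ‖a k‖ := tsum_congr hnorm
    _ = ((2 * π) ^ 2)⁻¹ * ∑' k, Real.sqrt (wfun k) * Real.sqrt (h k) := by
        rw [← tsum_mul_left]; exact tsum_congr key
    _ ≤ ((2 * π) ^ 2)⁻¹ * (Real.sqrt 6.05 * Real.sqrt (∑' k, h k)) := by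
        apply mul_le_mul_of_nonneg_left _ (by positivity)
        exact Summable.tsum_le_of_sum_le hsum_uv hCS
    _ = Real.sqrt 6.05 / (2 * π) ^ 2 * Real.sqrt (∑' k, h k) := by ring
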